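/- MGDA acute-angle property: if v₁, v₂ ∈ ℝⁿ and w = λ* v₁ + (1 − λ*) v₂ where λ* ∈ (0,1) is the unconstrained minimizer of λ ↦ ‖λ v₁ + (1−λ) v₂‖² (i.e., λ* = ((v₂ − v₁)ᵀ v₂)/‖v₁ − v₂‖²), and w ≠ 0, then wᵀv₁ = wᵀv₂ = ‖w‖² > 0, so w forms an acute angle with both v₁ and v₂. -/

import Mathlib

open RealInnerProductSpace

theorem mgda_acute_angle {n : ℕ}
    (v₁ v₂ : EuclideanSpace ℝ (Fin n)) (hne : v₁ ≠ v₂)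
    (lam : ℝ) (hlam : lam = ⟪v₂ - v₁, v₂⟫ / ‖v₁ - v₂‖ ^ 2)
    (hlam01 : lam ∈ Set.Ioo (0 : ℝ) 1)
    (w : EuclideanSpace ℝ (Fin n)) (hw : w = lam • v₁ + (1 - lam) • v₂)
    (hw0 : w ≠ 0) :
    ⟪w, v₁⟫ = ‖w‖ ^ 2 ∧ ⟪w, v₂⟫ = ‖w‖ ^ 2 ∧ 0 < ‖w‖ ^ 2 := by
  have hd : (‖v₁ - v₂‖ : ℝ) ^ 2 ≠ 0 := by
    have : v₁ - v₂ ≠ 0 := sub_ne_zero.mpr hne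
    exact pow_ne_zero 2 (norm_ne_zero_iff.mpr this)
  have hnorm : (‖v₁ - v₂‖ : ℝ) ^ 2 = ⟪v₁ - v₂, v₁ - v₂⟫ := by
    rw [real_inner_self_eq_norm_sq]
  have hlam' : lam * ⟪v₁ - v₂, v₁ - v₂⟫ = ⟪v₂ - v₁, v₂⟫ := by
    rw [← hnorm, hlam]
    exact div_mul_cancel₀ _ hd
  have key : ⟪w, v₁⟫ = ⟪w, v₂⟫ := by
    have h := hlam'
    simp only [inner_sub_left, inner_sub_right] at h
    subst hw
    simp only [inner_add_left, inner_smul_left, inner_sub_right,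
      conj_trivial]
    have c : ⟪v₂, v₁⟫ = ⟪v₁, v₂⟫ := real_inner_comm _ _
    nlinarith [h, c]
  have hpos : 0 < ‖w‖ ^ 2 := by
    have := norm_pos_iff.mpr hw0
    positivity
  have hww : ‖w‖ ^ 2 = ⟪w, w⟫ := (real_inner_self_eq_norm_sq w).symm
  have hw2 : ⟪w, w⟫ = lam * ⟪v₁, w⟫ + (1 - lam) * ⟪v₂, w⟫ := by
    nth_rewrite 1 [hw]
    simp [inner_add_left, inner_smul_left, conj_trivial]
  have c1 : ⟪v₁, w⟫ = ⟪w, v₁⟫ := real_inner_comm _ _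
  have c2 : ⟪v₂, w⟫ = ⟪w, v₂⟫ := real_inner_comm _ _
  have h1 : ⟪w, v₁⟫ = ‖w‖ ^ 2 := by
    rw [hww, hw2, c1, c2, ← key]; ring
  exact ⟨h1, key ▸ h1, hpos⟩
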